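/- Let ι be a countable index type, let λ : ι → ℝ be such that the family i ↦ (λ i)² is summable, and let R > √(∑'_i (λ i)²). Let g : ℂ → ℂ be analytic on the open ball of radius R centered at 0 with g(0) = 0. Then the family i ↦ |g(λ i)|² is summable. -/

import Mathlib

/-- If `ι` is countable, `i ↦ (l i)²` is summable, `R > √(∑' i, (l i)²)`,
and `g : ℂ → ℂ` is analytic on the open ball of radius `R` about `0` with `g 0 = 0`,
then `i ↦ |g (l i)|²` is summable. (Scalar form of: holomorphic functions vanishing at `0`
map Hilbert–Schmidt self-adjoint operators to Hilbert–Schmidt operators.) -/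
theorem stmt_6 {ι : Type*} [Countable ι] (l : ι → ℝ)
    (hl : Summable fun i : ι => (l i) ^ 2) (R : ℝ)
    (hR : Real.sqrt (∑' i : ι, (l i) ^ 2) < R)
    (g : ℂ → ℂ) (hg : ∀ z ∈ Metric.ball (0 : ℂ) R, AnalyticAt ℂ g z)
    (hg0 : g 0 = 0) :
    Summable fun i : ι => ‖g (l i)‖ ^ 2 := by
  set S : ℝ := Real.sqrt (∑' i : ι, (l i) ^ 2) with hS
  have hS0 : 0 ≤ S := Real.sqrt_nonneg _
  have hli : ∀ i, |l i| ≤ S := by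
    intro i
    have h1 : (l i) ^ 2 ≤ ∑' i, (l i) ^ 2 :=
      Summable.le_tsum hl i (fun j _ => sq_nonneg _)
    calc |l i| = Real.sqrt ((l i) ^ 2) := (Real.sqrt_sq_eq_abs _).symm
      _ ≤ S := Real.sqrt_le_sqrt h1
  -- h z = g z / z (extended)
  set h : ℂ → ℂ := fun z => if z = 0 then deriv g 0 else g z / z with hh
  have hmem : ∀ z : ℂ, ‖z‖ ≤ S → z ∈ Metric.ball (0 : ℂ) R := by
    intro z hz
    simp only [Metric.mem_ball, dist_zero_right]
    exact lt_of_le_of_lt hz hR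
  have hcont : ContinuousOn h (Metric.closedBall (0 : ℂ) S) := by
    intro z hz
    simp only [Metric.mem_closedBall, dist_zero_right] at hz
    rcases eq_or_ne z 0 with rfl | hz0
    · -- continuity at 0 via derivative
      have hd : HasDerivAt g (deriv g 0) 0 :=
        ((hg 0 (hmem 0 (by simpa using hS0))).differentiableAt).hasDerivAt
      have ht : Filter.Tendsto (slope g 0) (nhdsWithin 0 {(0:ℂ)}ᶜ) (nhds (deriv g 0)) :=
        hasDerivAt_iff_tendsto_slope.mp hd
      have heq : ∀ w : ℂ, w ∈ ({(0:ℂ)}ᶜ : Set ℂ) → slope g 0 w = h w := by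
        intro w hw
        have hw0 : w ≠ 0 := hw
        simp [hh, hw0, slope, hg0, div_eq_inv_mul]
      have ht' : Filter.Tendsto h (nhdsWithin 0 {(0:ℂ)}ᶜ) (nhds (h 0)) := by
        have : h 0 = deriv g 0 := by simp [hh]
        rw [this]
        exact ht.congr' (by filter_upwards [self_mem_nhdsWithin] using heq)
      have : ContinuousAt h 0 := by
        rw [ContinuousAt, ← nhdsNE_sup_pure (0:ℂ),
          Filter.tendsto_sup]
        exact ⟨ht', tendsto_pure_nhds h 0⟩
      exact this.continuousWithinAt
    · have : ContinuousAt h z := by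
        have hca : ContinuousAt (fun w => g w / w) z :=
          ((hg z (hmem z hz)).continuousAt).div continuousAt_id hz0
        refine hca.congr ?_
        filter_upwards [isOpen_compl_singleton.mem_nhds hz0] with w hw
        exact (if_neg (hw : w ≠ 0)).symm
      exact this.continuousWithinAt
  obtain ⟨C, hC⟩ := (isCompact_closedBall (0:ℂ) S).exists_bound_of_continuousOn hcont
  have hC0 : 0 ≤ C := le_trans (norm_nonneg _) (hC 0 (by simpa using hS0))
  have key : ∀ i, ‖g (l i)‖ ^ 2 ≤ C ^ 2 * (l i) ^ 2 := by
    intro i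
    have hmem' : (l i : ℂ) ∈ Metric.closedBall (0:ℂ) S := by
      simpa [Complex.norm_real, Real.norm_eq_abs] using hli i
    have hb := hC _ hmem'
    rcases eq_or_ne (l i) 0 with h0 | h0
    · simp [h0, hg0]
    · have h0' : (l i : ℂ) ≠ 0 := by exact_mod_cast h0
      have hgl : g (l i) = (l i : ℂ) * h (l i) := by
        simp [hh, h0', mul_div_cancel₀]
      calc ‖g (l i)‖ ^ 2 = (|l i| * ‖h (l i)‖) ^ 2 := by
            rw [hgl, norm_mul, Complex.norm_real, Real.norm_eq_abs]
        _ ≤ (|l i| * C) ^ 2 := by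
            have : ‖h (l i)‖ ≤ C := hb
            gcongr
        _ = C ^ 2 * (l i) ^ 2 := by rw [mul_pow, sq_abs]; ring
  exact Summable.of_nonneg_of_le (fun i => by positivity) key (hl.mul_left _)
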